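/- Let C₁, C₂ ∈ ℝ^{d×d} be symmetric positive definite with C₁² ≥ C₂² (i.e., C₁² − C₂² positive semidefinite). Then the Gaussian kernels satisfy k^{C₁} ⪯ (det C₁/det C₂)·k^{C₂}, where k^C(x,y) = exp(−‖C⁻¹(x−y)‖²). -/

import Mathlib

open Matrix

/-- `KerLE k₁ k₂` means `k₁ ⪯ k₂`. -/
def KerLE {S : Type*} (k₁ k₂ : S → S → ℝ) : Prop :=
  ∀ (n : ℕ) (α : Fin n → ℝ) (x : Fin n → S),
    ∑ i, ∑ j, α i * α j * k₁ (x i) (x j) ≤ ∑ i, ∑ j, α i * α j * k₂ (x i) (x j)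

/-- Gaussian kernel on `ℝ^d` with positive definite covariance matrix `C`. -/
noncomputable def gaussKer {d : ℕ} (C : Matrix (Fin d) (Fin d) ℝ) : (Fin d → ℝ) → (Fin d → ℝ) → ℝ :=
  fun x y => Real.exp (-((x - y) ⬝ᵥ (C⁻¹ ^ 2).mulVec (x - y)))


section GaussAux
open MeasureTheory Real


variable {d : ℕ}

lemma map_mulVec_volume (M : Matrix (Fin d) (Fin d) ℝ) (hM : M.det ≠ 0) :
    Measure.map (fun v => M.mulVec v) volume
      = ENNReal.ofReal |M.det|⁻¹ • volume := by
  have := Real.map_matrix_volume_pi_eq_smul_volume_pi hM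
  have h' : (⇑(Matrix.toLin' M) : (Fin d → ℝ) → (Fin d → ℝ)) = fun v => M.mulVec v :=
    funext fun v => Matrix.toLin'_apply M v
  rw [h'] at this
  simpa [abs_inv] using this

lemma integral_comp_mulVec (M : Matrix (Fin d) (Fin d) ℝ) (hM : M.det ≠ 0)
    (f : (Fin d → ℝ) → ℝ) (hf : Continuous f) :
    ∫ η, f (M.mulVec η) = |M.det|⁻¹ * ∫ ξ, f ξ := by
  have hmeas : Measurable fun v : Fin d → ℝ => M.mulVec v :=
    (Matrix.toLin' M).continuous_of_finiteDimensional.measurable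
  rw [← MeasureTheory.integral_map hmeas.aemeasurable hf.aestronglyMeasurable,
    map_mulVec_volume M hM, integral_smul_measure]
  simp [ENNReal.toReal_ofReal, abs_nonneg, smul_eq_mul]

lemma integrable_comp_mulVec {M : Matrix (Fin d) (Fin d) ℝ} (hM : M.det ≠ 0)
    {f : (Fin d → ℝ) → ℝ} (hf : Continuous f) :
    Integrable (fun η => f (M.mulVec η)) ↔ Integrable f := by
  have hmeas : Measurable fun v : Fin d → ℝ => M.mulVec v :=
    (Matrix.toLin' M).continuous_of_finiteDimensional.measurable
  have := MeasureTheory.integrable_map_measure (μ := volume)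
    hf.aestronglyMeasurable hmeas.aemeasurable
  rw [map_mulVec_volume M hM, integrable_smul_measure (by simp [hM]) (by simp)] at this
  exact this.symm

lemma integrable_gauss_complex (s : Fin d → ℝ) :
    Integrable (fun η : Fin d → ℝ =>
      Complex.exp (-∑ k, (1/4 : ℂ) * (η k : ℂ)^2 + ∑ k, ((s k : ℂ) * Complex.I) * (η k : ℂ))) := by
  have h1 : Integrable (fun η : Fin d → ℝ => ∏ k, Real.exp (-(1/4 : ℝ) * (η k)^2)) :=
    Integrable.fintype_prod (f := fun _ t => Real.exp (-(1/4 : ℝ) * t^2))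
      (fun _ => by simpa [sq] using integrable_exp_neg_mul_sq (by norm_num : (0:ℝ) < 1/4))
  refine h1.mono' ?_ ?_
  · apply Continuous.aestronglyMeasurable
    fun_prop
  · filter_upwards with η
    rw [Complex.norm_exp]
    simp only [Complex.add_re, Complex.neg_re, Complex.re_sum]
    have h3 : ∀ k, ((1/4 : ℂ) * (η k : ℂ)^2).re = (1/4 : ℝ) * (η k)^2 := by
      intro k
      simp [← Complex.ofReal_pow]
    have h2 : ∀ k, (((s k : ℂ) * Complex.I) * (η k : ℂ)).re = 0 := by
      intro k
      simp [Complex.mul_re, Complex.mul_im]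
    simp only [h3, h2, Finset.sum_const_zero, add_zero]
    rw [← Real.exp_sum]
    simp only [← Finset.sum_neg_distrib, neg_mul, le_refl]

lemma gauss_cos_integral (s : Fin d → ℝ) :
    ∫ η : Fin d → ℝ, Real.exp (-(η ⬝ᵥ η)/4) * Real.cos (s ⬝ᵥ η)
      = (Real.sqrt (4*π))^d * Real.exp (-(s ⬝ᵥ s)) := by
  have hint := integrable_gauss_complex s
  have hre : ∀ η : Fin d → ℝ,
      Real.exp (-(η ⬝ᵥ η)/4) * Real.cos (s ⬝ᵥ η)
        = (Complex.exp (-∑ k, (1/4 : ℂ) * (η k : ℂ)^2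
            + ∑ k, ((s k : ℂ) * Complex.I) * (η k : ℂ))).re := by
    intro η
    rw [Complex.exp_re]
    congr 1
    · congr 1
      simp only [Complex.add_re, Complex.neg_re, Complex.re_sum, dotProduct]
      have h3 : ∀ k, ((1/4 : ℂ) * (η k : ℂ)^2).re = (1/4 : ℝ) * (η k)^2 := by
        intro k; simp [← Complex.ofReal_pow]
      have h2 : ∀ k, (((s k : ℂ) * Complex.I) * (η k : ℂ)).re = 0 := by
        intro k; simp [Complex.mul_re, Complex.mul_im]
      simp only [h3, h2, Finset.sum_const_zero, add_zero, ← Finset.sum_div,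
        neg_div, ← Finset.sum_neg_distrib]
      rw [Finset.sum_div]
      refine Finset.sum_congr rfl fun k _ => by ring
    · congr 1
      simp only [Complex.add_im, Complex.neg_im, Complex.im_sum, dotProduct]
      have h3 : ∀ k, ((1/4 : ℂ) * (η k : ℂ)^2).im = 0 := by
        intro k; simp [← Complex.ofReal_pow]
      have h2 : ∀ k, (((s k : ℂ) * Complex.I) * (η k : ℂ)).im = s k * η k := by
        intro k; simp [Complex.mul_im, Complex.mul_re]
      simp [h2, ← Complex.ofReal_pow]
  simp only [hre]
  rw [← RCLike.re_eq_complex_re, integral_re hint, RCLike.re_eq_complex_re]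
  rw [GaussianFourier.integral_cexp_neg_sum_mul_add (fun _ => by norm_num) (fun k => (s k : ℂ) * Complex.I)]
  have hterm : ∀ k : Fin d, ((π : ℂ) / (1/4)) ^ (1/2 : ℂ)
      * Complex.exp (((s k : ℂ) * Complex.I)^2 / (4 * (1/4)))
      = ((Real.sqrt (4*π) * Real.exp (-(s k)^2) : ℝ) : ℂ) := by
    intro k
    have h4 : ((π : ℂ) / (1/4)) = ((4*π : ℝ) : ℂ) := by push_cast; ring
    have h5 : ((4*π : ℝ) : ℂ) ^ (1/2 : ℂ) = ((Real.sqrt (4*π) : ℝ) : ℂ) := by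
      rw [Real.sqrt_eq_rpow, Complex.ofReal_cpow (by positivity)]
      norm_num
    have h6 : (((s k : ℂ) * Complex.I)^2 / (4 * (1/4))) = ((-(s k)^2 : ℝ) : ℂ) := by
      push_cast
      rw [mul_pow, Complex.I_sq]
      ring
    rw [h4, h5, h6, ← Complex.ofReal_exp, ← Complex.ofReal_mul]
  rw [Finset.prod_congr rfl fun k _ => hterm k]
  rw [← Complex.ofReal_prod]
  rw [Complex.ofReal_re]
  rw [Finset.prod_mul_distrib, Finset.prod_const, ← Real.exp_sum]
  congr 1
  · simp
  · rw [show s ⬝ᵥ s = ∑ k, s k * s k from rfl, ← Finset.sum_neg_distrib]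
    exact congrArg Real.exp (Finset.sum_congr rfl fun k _ => by ring)

lemma cont_quad (A : Matrix (Fin d) (Fin d) ℝ) :
    Continuous fun ξ : Fin d → ℝ => ξ ⬝ᵥ A.mulVec ξ := by
  show Continuous fun ξ : Fin d → ℝ => ∑ i, ξ i * ∑ j, A i j * ξ j
  exact continuous_finset_sum _ fun i _ => (continuous_apply i).mul
    (continuous_finset_sum _ fun j _ => continuous_const.mul (continuous_apply j))

lemma cont_dot (t : Fin d → ℝ) : Continuous fun ξ : Fin d → ℝ => t ⬝ᵥ ξ := by
  show Continuous fun ξ : Fin d → ℝ => ∑ i, t i * ξ i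
  exact continuous_finset_sum _ fun i _ => continuous_const.mul (continuous_apply i)

variable {C : Matrix (Fin d) (Fin d) ℝ}

lemma symm_of_posDef (hC : C.PosDef) : Cᵀ = C := by
  rw [← Matrix.conjTranspose_eq_transpose_of_trivial]; exact hC.1.eq

lemma comp_inv_quad (hC : C.PosDef) (η : Fin d → ℝ) :
    (C⁻¹.mulVec η) ⬝ᵥ (C^2).mulVec (C⁻¹.mulVec η) = η ⬝ᵥ η := by
  have hdet : IsUnit C.det := hC.det_pos.ne'.isUnit
  have h1 : (C^2) * C⁻¹ = C := by
    rw [pow_two, Matrix.mul_assoc, Matrix.mul_nonsing_inv _ hdet, Matrix.mul_one]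
  rw [Matrix.mulVec_mulVec, h1, Matrix.dotProduct_mulVec, ← Matrix.mulVec_transpose,
    symm_of_posDef hC, Matrix.mulVec_mulVec, Matrix.mul_nonsing_inv _ hdet,
    Matrix.one_mulVec]

lemma dot_shift (hC : C.PosDef) (t η : Fin d → ℝ) :
    t ⬝ᵥ (C⁻¹.mulVec η) = (C⁻¹.mulVec t) ⬝ᵥ η := by
  rw [Matrix.dotProduct_mulVec, ← Matrix.mulVec_transpose,
    Matrix.transpose_nonsing_inv, symm_of_posDef hC]

lemma gauss_rep (hC : C.PosDef) (t : Fin d → ℝ) :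
    ∫ ξ : Fin d → ℝ, Real.exp (-(ξ ⬝ᵥ (C^2).mulVec ξ)/4) * Real.cos (t ⬝ᵥ ξ)
      = (Real.sqrt (4*π))^d / C.det * Real.exp (-(t ⬝ᵥ (C⁻¹^2).mulVec t)) := by
  have hdet := hC.det_pos
  have hdetinv : (C⁻¹).det ≠ 0 := by
    rw [Matrix.det_nonsing_inv, Ring.inverse_eq_inv']
    exact inv_ne_zero hdet.ne'
  set f : (Fin d → ℝ) → ℝ :=
    fun ξ => Real.exp (-(ξ ⬝ᵥ (C^2).mulVec ξ)/4) * Real.cos (t ⬝ᵥ ξ) with hf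
  have hcont : Continuous f :=
    ((Real.continuous_exp.comp ((cont_quad (C^2)).neg.div_const 4)).mul
      (Real.continuous_cos.comp (cont_dot t)))
  have key := integral_comp_mulVec (C⁻¹) hdetinv f hcont
  have hcomp : ∀ η, f (C⁻¹.mulVec η)
      = Real.exp (-(η ⬝ᵥ η)/4) * Real.cos ((C⁻¹.mulVec t) ⬝ᵥ η) := by
    intro η
    rw [hf]
    simp only
    rw [comp_inv_quad hC, dot_shift hC]
  rw [funext hcomp] at key  -- may fail; fix below
  rw [gauss_cos_integral] at key
  have hss : (C⁻¹.mulVec t) ⬝ᵥ (C⁻¹.mulVec t) = t ⬝ᵥ (C⁻¹^2).mulVec t := by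
    rw [pow_two, ← Matrix.mulVec_mulVec, dot_shift hC]
    exact dotProduct_comm _ _
  rw [hss] at key
  have habs : |(C⁻¹).det|⁻¹ = C.det := by
    rw [Matrix.det_nonsing_inv, Ring.inverse_eq_inv', abs_of_pos (inv_pos.mpr hdet), inv_inv]
  rw [habs] at key
  field_simp at key ⊢
  linarith [key]

lemma integrable_gauss_cos (s : Fin d → ℝ) :
    Integrable (fun η : Fin d → ℝ => Real.exp (-(η ⬝ᵥ η)/4) * Real.cos (s ⬝ᵥ η)) := by
  have h1 : Integrable (fun η : Fin d → ℝ => ∏ k, Real.exp (-(1/4 : ℝ) * (η k)^2)) :=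
    Integrable.fintype_prod (f := fun _ t => Real.exp (-(1/4 : ℝ) * t^2))
      (fun _ => by simpa [sq] using integrable_exp_neg_mul_sq (by norm_num : (0:ℝ) < 1/4))
  have hc : Continuous fun η : Fin d → ℝ => η ⬝ᵥ η := by
    show Continuous fun η : Fin d → ℝ => ∑ i, η i * η i
    exact continuous_finset_sum _ fun i _ => (continuous_apply i).mul (continuous_apply i)
  refine h1.mono' ?_ ?_
  · exact ((Real.continuous_exp.comp (hc.neg.div_const 4)).mul
      (Real.continuous_cos.comp (cont_dot s))).aestronglyMeasurable
  · filter_upwards with η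
    rw [Real.norm_eq_abs, abs_mul, abs_of_pos (Real.exp_pos _)]
    calc Real.exp (-(η ⬝ᵥ η)/4) * |Real.cos (s ⬝ᵥ η)|
        ≤ Real.exp (-(η ⬝ᵥ η)/4) * 1 := by
          gcongr
          exact Real.abs_cos_le_one _
      _ = ∏ k, Real.exp (-(1/4 : ℝ) * (η k)^2) := by
          rw [mul_one, ← Real.exp_sum]
          congr 1
          rw [show η ⬝ᵥ η = ∑ k, η k * η k from rfl, ← Finset.sum_neg_distrib,
            Finset.sum_div]
          exact Finset.sum_congr rfl fun k _ => by ring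

lemma cont_wcos (C : Matrix (Fin d) (Fin d) ℝ) (t : Fin d → ℝ) :
    Continuous fun ξ : Fin d → ℝ =>
      Real.exp (-(ξ ⬝ᵥ (C^2).mulVec ξ)/4) * Real.cos (t ⬝ᵥ ξ) :=
  (Real.continuous_exp.comp ((cont_quad (C^2)).neg.div_const 4)).mul
    (Real.continuous_cos.comp (cont_dot t))

lemma integrable_wcos (hC : C.PosDef) (t : Fin d → ℝ) :
    Integrable (fun ξ : Fin d → ℝ =>
      Real.exp (-(ξ ⬝ᵥ (C^2).mulVec ξ)/4) * Real.cos (t ⬝ᵥ ξ)) := by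
  have hdetinv : (C⁻¹).det ≠ 0 := by
    rw [Matrix.det_nonsing_inv, Ring.inverse_eq_inv']
    exact inv_ne_zero hC.det_pos.ne'
  rw [← integrable_comp_mulVec hdetinv (cont_wcos C t)]
  have hcomp : (fun η : Fin d → ℝ => Real.exp (-((C⁻¹.mulVec η) ⬝ᵥ (C^2).mulVec (C⁻¹.mulVec η))/4)
      * Real.cos (t ⬝ᵥ (C⁻¹.mulVec η)))
      = fun η => Real.exp (-(η ⬝ᵥ η)/4) * Real.cos ((C⁻¹.mulVec t) ⬝ᵥ η) := by
    funext η
    rw [comp_inv_quad hC, dot_shift hC]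
  rw [show (fun η : Fin d → ℝ => Real.exp (-((C⁻¹.mulVec η) ⬝ᵥ (C^2).mulVec (C⁻¹.mulVec η))/4)
      * Real.cos (t ⬝ᵥ (C⁻¹.mulVec η))) = _ from hcomp]
  exact integrable_gauss_cos _


end GaussAux

open MeasureTheory Real in
theorem gauss_kernel_loewner_mono {d : ℕ} (C₁ C₂ : Matrix (Fin d) (Fin d) ℝ)
    (hC₁ : C₁.PosDef) (hC₂ : C₂.PosDef) (h : (C₁ ^ 2 - C₂ ^ 2).PosSemidef) :
    KerLE (gaussKer C₁) (fun x y => (C₁.det / C₂.det) * gaussKer C₂ x y) := by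
  intro n α x
  set K : ℝ := (Real.sqrt (4*π))^d with hKdef
  have hK : 0 < K := pow_pos (Real.sqrt_pos.mpr (by positivity)) d
  set G : (Fin d → ℝ) → ℝ := fun ξ =>
    (∑ i, α i * Real.cos (x i ⬝ᵥ ξ))^2 + (∑ i, α i * Real.sin (x i ⬝ᵥ ξ))^2 with hGdef
  have hGnonneg : ∀ ξ, 0 ≤ G ξ := fun ξ => by positivity
  have hG : ∀ ξ, G ξ = ∑ i, ∑ j, α i * α j * Real.cos ((x i - x j) ⬝ᵥ ξ) := by
    intro ξ
    rw [hGdef]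
    simp only [sq, Finset.sum_mul_sum, ← Finset.sum_add_distrib]
    refine Finset.sum_congr rfl fun i _ => Finset.sum_congr rfl fun j _ => ?_
    rw [sub_dotProduct, Real.cos_sub]
    ring
  -- weight functions
  set w : Matrix (Fin d) (Fin d) ℝ → (Fin d → ℝ) → ℝ :=
    fun C ξ => Real.exp (-(ξ ⬝ᵥ (C^2).mulVec ξ)/4) with hwdef
  have hwG : ∀ C : Matrix (Fin d) (Fin d) ℝ, ∀ ξ, w C ξ * G ξ
      = ∑ i, ∑ j, α i * α j * (w C ξ * Real.cos ((x i - x j) ⬝ᵥ ξ)) := by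
    intro C ξ
    rw [hG ξ, Finset.mul_sum]
    refine Finset.sum_congr rfl fun i _ => ?_
    rw [Finset.mul_sum]
    exact Finset.sum_congr rfl fun j _ => by ring
  have hIntWG : ∀ C : Matrix (Fin d) (Fin d) ℝ, C.PosDef →
      Integrable (fun ξ => w C ξ * G ξ) := by
    intro C hC
    rw [show (fun ξ => w C ξ * G ξ)
        = fun ξ => ∑ i, ∑ j, α i * α j * (w C ξ * Real.cos ((x i - x j) ⬝ᵥ ξ)) from
      funext fun ξ => hwG C ξ]
    exact integrable_finset_sum _ fun i _ =>
      integrable_finset_sum _ fun j _ => ((integrable_wcos hC (x i - x j)).const_mul _)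
  -- representation of the quadratic form sums
  have hRep : ∀ C : Matrix (Fin d) (Fin d) ℝ, (hC : C.PosDef) →
      ∑ i, ∑ j, α i * α j * gaussKer C (x i) (x j)
        = C.det / K * ∫ ξ, w C ξ * G ξ := by
    intro C hC
    rw [show (fun ξ => w C ξ * G ξ)
        = fun ξ => ∑ i, ∑ j, α i * α j * (w C ξ * Real.cos ((x i - x j) ⬝ᵥ ξ)) from
      funext fun ξ => hwG C ξ]
    rw [integral_finset_sum _ fun i _ => integrable_finset_sum _ fun j _ =>
      ((integrable_wcos hC (x i - x j)).const_mul _)]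
    rw [Finset.mul_sum]
    refine Finset.sum_congr rfl fun i _ => ?_
    rw [integral_finset_sum _ fun j _ => ((integrable_wcos hC (x i - x j)).const_mul _),
      Finset.mul_sum]
    refine Finset.sum_congr rfl fun j _ => ?_
    rw [integral_const_mul, gauss_rep hC (x i - x j)]
    have hker : gaussKer C (x i) (x j)
        = Real.exp (-((x i - x j) ⬝ᵥ (C⁻¹^2).mulVec (x i - x j))) := rfl
    rw [hker]
    have hcc : C.det / K * (K / C.det) = 1 := by
      field_simp [hC.det_pos.ne']
    rw [show C.det / K * (α i * α j
          * (K / C.det * Real.exp (-((x i - x j) ⬝ᵥ (C⁻¹^2).mulVec (x i - x j)))))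
        = (C.det / K * (K / C.det))
          * (α i * α j * Real.exp (-((x i - x j) ⬝ᵥ (C⁻¹^2).mulVec (x i - x j)))) from by ring,
      hcc, one_mul]
  -- pointwise monotonicity of weights
  have hwmono : ∀ ξ, w C₁ ξ ≤ w C₂ ξ := by
    intro ξ
    rw [hwdef]
    simp only
    apply Real.exp_le_exp.mpr
    have := h.dotProduct_mulVec_nonneg ξ
    rw [Matrix.sub_mulVec, dotProduct_sub] at this
    have hstar : (star ξ : Fin d → ℝ) = ξ := by simp
    rw [hstar] at this
    have h9 : ξ ⬝ᵥ (C₂^2).mulVec ξ ≤ ξ ⬝ᵥ (C₁^2).mulVec ξ := by linarith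
    gcongr
  -- conclude
  have hmono : ∫ ξ, w C₁ ξ * G ξ ≤ ∫ ξ, w C₂ ξ * G ξ := by
    apply integral_mono (hIntWG C₁ hC₁) (hIntWG C₂ hC₂)
    intro ξ
    exact mul_le_mul_of_nonneg_right (hwmono ξ) (hGnonneg ξ)
  rw [hRep C₁ hC₁]
  have hrhs : ∑ i, ∑ j, α i * α j * (C₁.det / C₂.det * gaussKer C₂ (x i) (x j))
      = C₁.det / C₂.det * ∑ i, ∑ j, α i * α j * gaussKer C₂ (x i) (x j) := by
    rw [Finset.mul_sum]
    refine Finset.sum_congr rfl fun i _ => ?_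
    rw [Finset.mul_sum]
    exact Finset.sum_congr rfl fun j _ => by ring
  rw [hrhs, hRep C₂ hC₂]
  have hd1 := hC₁.det_pos
  have hd2 := hC₂.det_pos
  rw [show C₁.det / C₂.det * (C₂.det / K * ∫ ξ, w C₂ ξ * G ξ)
      = C₁.det / K * ∫ ξ, w C₂ ξ * G ξ by field_simp]
  exact mul_le_mul_of_nonneg_left hmono (by positivity)
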